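/- Convergence of soft policy iteration: in a discounted MDP with finite state and action spaces, bounded reward, and γ ∈ (0,1), the sequence of soft Q-functions Q^{π_k} produced by alternating exact soft policy evaluation and exact soft policy improvement is pointwise monotonically nondecreasing and uniformly bounded, hence converges pointwise. -/

import Mathlib

open Finset Filter

lemma weighted_sum_le {A : Type*} [Fintype A] (w v : A → ℝ) (D : ℝ)
    (hw0 : ∀ a, 0 ≤ w a) (hw1 : ∑ a : A, w a = 1) (hv : ∀ a, v a ≤ D) :
    ∑ a : A, w a * v a ≤ D := by
  calc ∑ a : A, w a * v a ≤ ∑ a : A, w a * D :=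
        Finset.sum_le_sum (fun a _ => mul_le_mul_of_nonneg_left (hv a) (hw0 a))
    _ = D := by rw [← Finset.sum_mul, hw1, one_mul]

lemma weighted_abs_le {A : Type*} [Fintype A] (w v : A → ℝ) (D : ℝ)
    (hw0 : ∀ a, 0 ≤ w a) (hw1 : ∑ a : A, w a = 1) (hv : ∀ a, |v a| ≤ D) :
    |∑ a : A, w a * v a| ≤ D := by
  calc |∑ a : A, w a * v a| ≤ ∑ a : A, |w a * v a| := Finset.abs_sum_le_sum_abs _ _
    _ = ∑ a : A, w a * |v a| := by
        refine Finset.sum_congr rfl fun a _ => ?_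
        rw [abs_mul, abs_of_nonneg (hw0 a)]
    _ ≤ D := weighted_sum_le w (fun a => |v a|) D hw0 hw1 hv

lemma neg_mul_log_bounds {x : ℝ} (h0 : 0 ≤ x) (h1 : x ≤ 1) :
    0 ≤ -(x * Real.log x) ∧ -(x * Real.log x) ≤ 1 - x := by
  rcases eq_or_lt_of_le h0 with h | h
  · simp [← h]
  constructor
  · have : Real.log x ≤ 0 := Real.log_nonpos h0 h1
    nlinarith
  · have hinv : Real.log x⁻¹ ≤ x⁻¹ - 1 := Real.log_le_sub_one_of_pos (by positivity)
    rw [Real.log_inv] at hinv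
    have hx : x * x⁻¹ = 1 := mul_inv_cancel₀ (ne_of_gt h)
    nlinarith

lemma inner_abs_bound {A : Type*} [Fintype A] (α M : ℝ) (hα : 0 ≤ α)
    (w Qf : A → ℝ) (hw0 : ∀ a, 0 ≤ w a) (hw1 : ∑ a : A, w a = 1)
    (hQ : ∀ a, |Qf a| ≤ M) :
    |∑ a : A, w a * (Qf a - α * Real.log (w a))| ≤ M + α * (Fintype.card A) := by
  have hwle1 : ∀ a : A, w a ≤ 1 := fun a =>
    hw1 ▸ Finset.single_le_sum (fun b _ => hw0 b) (Finset.mem_univ a)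
  have hsplit : ∑ a : A, w a * (Qf a - α * Real.log (w a))
      = (∑ a : A, w a * Qf a) - α * ∑ a : A, w a * Real.log (w a) := by
    rw [Finset.mul_sum, ← Finset.sum_sub_distrib]
    exact Finset.sum_congr rfl fun a _ => by ring
  rw [hsplit]
  have h1 : |∑ a : A, w a * Qf a| ≤ M := weighted_abs_le w Qf M hw0 hw1 hQ
  have h2 : |∑ a : A, w a * Real.log (w a)| ≤ (Fintype.card A : ℝ) := by
    have hterm : ∀ a : A, |w a * Real.log (w a)| ≤ 1 := by
      intro a
      obtain ⟨hb1, hb2⟩ := neg_mul_log_bounds (hw0 a) (hwle1 a)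
      rw [abs_le]
      have hw := hw0 a
      constructor <;> nlinarith
    calc |∑ a : A, w a * Real.log (w a)| ≤ ∑ a : A, |w a * Real.log (w a)| :=
          Finset.abs_sum_le_sum_abs _ _
      _ ≤ ∑ _a : A, (1 : ℝ) := Finset.sum_le_sum fun a _ => hterm a
      _ = (Fintype.card A : ℝ) := by simp
  calc |(∑ a : A, w a * Qf a) - α * ∑ a : A, w a * Real.log (w a)|
      ≤ |∑ a : A, w a * Qf a| + |α * ∑ a : A, w a * Real.log (w a)| := abs_sub _ _
    _ ≤ M + α * (Fintype.card A) := by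
        rw [abs_mul, abs_of_nonneg hα]
        exact add_le_add h1 (mul_le_mul_of_nonneg_left h2 hα)

lemma gibbs {A : Type*} [Fintype A] [Nonempty A] {α : ℝ} (hα : 0 < α)
    (w f : A → ℝ) (hw0 : ∀ a, 0 ≤ w a) (hw1 : ∑ a : A, w a = 1) :
    ∑ a : A, w a * (f a - α * Real.log (w a))
      ≤ α * Real.log (∑ b : A, Real.exp (f b / α)) := by
  set Z := ∑ b : A, Real.exp (f b / α) with hZdef
  have hZ : 0 < Z := Finset.sum_pos (fun b _ => Real.exp_pos _) Finset.univ_nonempty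
  have key : ∀ a : A, w a * (f a - α * Real.log (w a))
      ≤ α * (Real.exp (f a / α) / Z - w a + w a * Real.log Z) := by
    intro a
    rcases eq_or_lt_of_le (hw0 a) with h | h
    · rw [← h]
      have : (0:ℝ) ≤ Real.exp (f a / α) / Z := by positivity
      nlinarith
    · have ht : 0 < Real.exp (f a / α) / (Z * w a) := by positivity
      have hlog : Real.log (Real.exp (f a / α) / (Z * w a))
          ≤ Real.exp (f a / α) / (Z * w a) - 1 := Real.log_le_sub_one_of_pos ht
      rw [Real.log_div (Real.exp_ne_zero _) (by positivity),
        Real.log_exp, Real.log_mul (ne_of_gt hZ) (ne_of_gt h)] at hlog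
      have hdiv : Real.exp (f a / α) / (Z * w a) * w a = Real.exp (f a / α) / Z := by
        field_simp
      -- multiply hlog by w a > 0 and α > 0
      have h2 : w a * (f a / α - (Real.log Z + Real.log (w a)))
          ≤ Real.exp (f a / α) / Z - w a := by
        have := mul_le_mul_of_nonneg_left hlog (le_of_lt h)
        calc w a * (f a / α - (Real.log Z + Real.log (w a)))
            ≤ w a * (Real.exp (f a / α) / (Z * w a) - 1) := this
          _ = Real.exp (f a / α) / Z - w a := by rw [mul_sub, mul_comm, hdiv]; ring
      have hαne : α ≠ 0 := ne_of_gt hα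
      have := mul_le_mul_of_nonneg_left h2 (le_of_lt hα)
      calc w a * (f a - α * Real.log (w a))
          = α * (w a * (f a / α - (Real.log Z + Real.log (w a)))) + α * (w a * Real.log Z) := by
            field_simp; ring
        _ ≤ α * (Real.exp (f a / α) / Z - w a) + α * (w a * Real.log Z) := by linarith
        _ = α * (Real.exp (f a / α) / Z - w a + w a * Real.log Z) := by ring
  calc ∑ a : A, w a * (f a - α * Real.log (w a))
      ≤ ∑ a : A, α * (Real.exp (f a / α) / Z - w a + w a * Real.log Z) :=
        Finset.sum_le_sum fun a _ => key a
    _ = α * ((∑ a : A, Real.exp (f a / α) / Z) - (∑ a : A, w a)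
          + (∑ a : A, w a) * Real.log Z) := by
        rw [← Finset.mul_sum, Finset.sum_add_distrib, Finset.sum_sub_distrib,
          ← Finset.sum_mul]
    _ = α * Real.log Z := by
        rw [← Finset.sum_div, ← hZdef, div_self (ne_of_gt hZ), hw1]
        ring

lemma softmax_value {A : Type*} [Fintype A] [Nonempty A] {α : ℝ} (hα : 0 < α)
    (f : A → ℝ) :
    ∑ a : A, (Real.exp (f a / α) / ∑ b : A, Real.exp (f b / α)) *
        (f a - α * Real.log (Real.exp (f a / α) / ∑ b : A, Real.exp (f b / α)))
      = α * Real.log (∑ b : A, Real.exp (f b / α)) := by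
  set Z := ∑ b : A, Real.exp (f b / α) with hZdef
  have hZ : 0 < Z := Finset.sum_pos (fun b _ => Real.exp_pos _) Finset.univ_nonempty
  have hlog : ∀ a : A, Real.log (Real.exp (f a / α) / Z) = f a / α - Real.log Z := by
    intro a
    rw [Real.log_div (Real.exp_ne_zero _) (ne_of_gt hZ), Real.log_exp]
  have hc : ∀ a : A, f a - α * Real.log (Real.exp (f a / α) / Z) = α * Real.log Z := by
    intro a
    rw [hlog a]
    field_simp
    ring
  calc ∑ a : A, (Real.exp (f a / α) / Z) * (f a - α * Real.log (Real.exp (f a / α) / Z))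
      = ∑ a : A, (Real.exp (f a / α) / Z) * (α * Real.log Z) :=
        Finset.sum_congr rfl fun a _ => by rw [hc a]
    _ = (∑ a : A, Real.exp (f a / α) / Z) * (α * Real.log Z) := by rw [Finset.sum_mul]
    _ = α * Real.log Z := by
        rw [← Finset.sum_div, ← hZdef, div_self (ne_of_gt hZ), one_mul]

/-- The soft Bellman operator associated with a policy `π`. -/
noncomputable def softBellman {S A : Type*} [Fintype S] [Fintype A]
    (r : S × A → ℝ) (γ α : ℝ) (p : S × A → S → ℝ) (π : S → A → ℝ)
    (Q : S × A → ℝ) : S × A → ℝ :=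
  fun sa =>
    r sa + γ * ∑ s' : S, p sa s' *
      ∑ a' : A, π s' a' * (Q (s', a') - α * Real.log (π s' a'))

/-- Convergence of soft policy iteration: in a discounted MDP with finite
state and action spaces, bounded reward, and `γ ∈ (0,1)`, the sequence of
soft Q-functions `Q^{π_k}` produced by alternating exact soft policy
evaluation (`Q k` is the fixed point of `T^{π_k}`) and exact soft policy
improvement (`π_{k+1}(·|s)` is the entropy-regularized argmax, i.e. the
softmax of `Q^{π_k}(s,·)/α`) is pointwise monotonically nondecreasing and
uniformly bounded, hence converges pointwise. -/
theorem soft_policy_iteration_converges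
    {S A : Type*} [Fintype S] [Fintype A] [Nonempty S] [Nonempty A]
    (r : S × A → ℝ) (R_max : ℝ) (hr : ∀ sa, |r sa| ≤ R_max)
    (γ α : ℝ) (hγ0 : 0 < γ) (hγ1 : γ < 1) (hα : 0 < α)
    (p : S × A → S → ℝ) (hp0 : ∀ sa s', 0 ≤ p sa s')
    (hp1 : ∀ sa, ∑ s' : S, p sa s' = 1)
    (π : ℕ → S → A → ℝ)
    (hπ0 : ∀ k s a, 0 ≤ π k s a) (hπ1 : ∀ k s, ∑ a : A, π k s a = 1)
    (Q : ℕ → S × A → ℝ)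
    (heval : ∀ k, softBellman r γ α p (π k) (Q k) = Q k)
    (himp : ∀ k s a, π (k + 1) s a =
      Real.exp (Q k (s, a) / α) / ∑ b : A, Real.exp (Q k (s, b) / α)) :
    (∀ k sa, Q k sa ≤ Q (k + 1) sa) ∧
    (∃ C : ℝ, ∀ k sa, |Q k sa| ≤ C) ∧
    (∀ sa, ∃ L : ℝ, Tendsto (fun k => Q k sa) atTop (nhds L)) := by
  have hRmax : 0 ≤ R_max := le_trans (abs_nonneg _) (hr (Classical.arbitrary _))
  have hγ1' : 0 < 1 - γ := by linarith
  set n : ℝ := (Fintype.card A : ℝ) with hn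
  have hn0 : 0 ≤ n := by positivity
  -- Uniform boundedness
  have hbound : ∀ k sa, |Q k sa| ≤ (R_max + α * n) / (1 - γ) := by
    intro k sa
    obtain ⟨sa0, -, hmax⟩ := Finset.exists_max_image Finset.univ
      (fun sa => |Q k sa|) Finset.univ_nonempty
    have hMle : |Q k sa0| ≤ R_max + γ * (|Q k sa0| + α * n) := by
      have heq : Q k sa0 = softBellman r γ α p (π k) (Q k) sa0 :=
        (congrFun (heval k) sa0).symm
      have hinner : ∀ s' : S,
          |∑ a' : A, π k s' a' * (Q k (s', a') - α * Real.log (π k s' a'))|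
            ≤ |Q k sa0| + α * n := by
        intro s'
        exact inner_abs_bound α |Q k sa0| hα.le (π k s') (fun a' => Q k (s', a'))
          (hπ0 k s') (hπ1 k s') (fun a' => hmax (s', a') (Finset.mem_univ _))
      have houter : |∑ s' : S, p sa0 s' *
          ∑ a' : A, π k s' a' * (Q k (s', a') - α * Real.log (π k s' a'))|
            ≤ |Q k sa0| + α * n :=
        weighted_abs_le _ _ _ (hp0 sa0) (hp1 sa0) hinner
      calc |Q k sa0|
          = |r sa0 + γ * ∑ s' : S, p sa0 s' *
              ∑ a' : A, π k s' a' * (Q k (s', a') - α * Real.log (π k s' a'))| := by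
            rw [heq]; rfl
        _ ≤ |r sa0| + |γ| * |∑ s' : S, p sa0 s' *
              ∑ a' : A, π k s' a' * (Q k (s', a') - α * Real.log (π k s' a'))| := by
            rw [← abs_mul]; exact abs_add_le _ _
        _ ≤ R_max + γ * (|Q k sa0| + α * n) := by
            rw [abs_of_pos hγ0]
            exact add_le_add (hr sa0) (mul_le_mul_of_nonneg_left houter hγ0.le)
    have hM : |Q k sa0| ≤ (R_max + α * n) / (1 - γ) := by
      rw [le_div_iff₀ hγ1']
      nlinarith [mul_nonneg hγ1'.le (mul_nonneg hα.le hn0)]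
    exact le_trans (hmax sa (Finset.mem_univ _)) hM
  -- Monotonicity
  have hmono : ∀ k sa, Q k sa ≤ Q (k + 1) sa := by
    intro k
    have step1 : ∀ sa, Q k sa ≤ softBellman r γ α p (π (k+1)) (Q k) sa := by
      intro sa
      conv_lhs => rw [← heval k]
      simp only [softBellman]
      have hin : ∀ s' : S,
          ∑ a' : A, π k s' a' * (Q k (s', a') - α * Real.log (π k s' a'))
          ≤ ∑ a' : A, π (k+1) s' a' * (Q k (s', a') - α * Real.log (π (k+1) s' a')) := by
        intro s'
        calc ∑ a' : A, π k s' a' * (Q k (s', a') - α * Real.log (π k s' a'))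
            ≤ α * Real.log (∑ b : A, Real.exp (Q k (s', b) / α)) :=
              gibbs hα (π k s') (fun a => Q k (s', a)) (hπ0 k s') (hπ1 k s')
          _ = ∑ a' : A, π (k+1) s' a' * (Q k (s', a') - α * Real.log (π (k+1) s' a')) := by
              rw [← softmax_value hα (fun a => Q k (s', a))]
              exact Finset.sum_congr rfl fun a' _ => by rw [himp k s' a']
      exact add_le_add le_rfl (mul_le_mul_of_nonneg_left (Finset.sum_le_sum fun s' _ =>
        mul_le_mul_of_nonneg_left (hin s') (hp0 sa s')) hγ0.le)
    obtain ⟨sa0, -, hmax⟩ := Finset.exists_max_image Finset.univ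
      (fun sa => Q k sa - Q (k+1) sa) Finset.univ_nonempty
    have inner_eq : ∀ s' : S,
        (∑ a' : A, π (k+1) s' a' * (Q k (s', a') - α * Real.log (π (k+1) s' a')))
        - (∑ a' : A, π (k+1) s' a' * (Q (k+1) (s', a') - α * Real.log (π (k+1) s' a')))
        = ∑ a' : A, π (k+1) s' a' * (Q k (s', a') - Q (k+1) (s', a')) := by
      intro s'
      rw [← Finset.sum_sub_distrib]
      exact Finset.sum_congr rfl fun a' _ => by ring
    have hdiff : softBellman r γ α p (π (k+1)) (Q k) sa0
        - softBellman r γ α p (π (k+1)) (Q (k+1)) sa0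
        = γ * ∑ s' : S, p sa0 s' *
            ∑ a' : A, π (k+1) s' a' * (Q k (s', a') - Q (k+1) (s', a')) := by
      have hS : (∑ s' : S, p sa0 s' *
            ∑ a' : A, π (k+1) s' a' * (Q k (s', a') - α * Real.log (π (k+1) s' a')))
          - (∑ s' : S, p sa0 s' *
            ∑ a' : A, π (k+1) s' a' * (Q (k+1) (s', a') - α * Real.log (π (k+1) s' a')))
          = ∑ s' : S, p sa0 s' *
            ∑ a' : A, π (k+1) s' a' * (Q k (s', a') - Q (k+1) (s', a')) := by
        rw [← Finset.sum_sub_distrib]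
        exact Finset.sum_congr rfl fun s' _ => by rw [← mul_sub, inner_eq s']
      simp only [softBellman]
      linear_combination γ * hS
    have hDle : Q k sa0 - Q (k+1) sa0 ≤ γ * (Q k sa0 - Q (k+1) sa0) := by
      have h2 : softBellman r γ α p (π (k+1)) (Q (k+1)) sa0 = Q (k+1) sa0 :=
        congrFun (heval (k+1)) sa0
      have hfin : γ * (∑ s' : S, p sa0 s' *
            ∑ a' : A, π (k+1) s' a' * (Q k (s', a') - Q (k+1) (s', a')))
          ≤ γ * (Q k sa0 - Q (k+1) sa0) :=
        mul_le_mul_of_nonneg_left (weighted_sum_le _ _ _ (hp0 sa0) (hp1 sa0)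
          (fun s' => weighted_sum_le _ _ _ (hπ0 (k+1) s') (hπ1 (k+1) s')
            (fun a' => hmax (s', a') (Finset.mem_univ _)))) hγ0.le
      calc Q k sa0 - Q (k+1) sa0
          ≤ softBellman r γ α p (π (k+1)) (Q k) sa0
            - softBellman r γ α p (π (k+1)) (Q (k+1)) sa0 := by
            linarith [step1 sa0]
        _ = γ * ∑ s' : S, p sa0 s' *
              ∑ a' : A, π (k+1) s' a' * (Q k (s', a') - Q (k+1) (s', a')) := hdiff
        _ ≤ γ * (Q k sa0 - Q (k+1) sa0) := hfin
    have hD0 : Q k sa0 - Q (k+1) sa0 ≤ 0 := by nlinarith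
    intro sa
    have := hmax sa (Finset.mem_univ _)
    linarith
  refine ⟨hmono, ⟨(R_max + α * n) / (1 - γ), hbound⟩, fun sa => ?_⟩
  have hm : Monotone fun k => Q k sa := monotone_nat_of_le_succ fun k => hmono k sa
  have hb : BddAbove (Set.range fun k => Q k sa) := by
    refine ⟨(R_max + α * n) / (1 - γ), fun x hx => ?_⟩
    obtain ⟨k, rfl⟩ := hx
    exact le_of_abs_le (hbound k sa)
  exact ⟨_, tendsto_atTop_ciSup hm hb⟩
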